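/- Let X, Y be disjoint C¹-submanifolds of ℝⁿ with Y ⊆ closure(X), and suppose the pair (X, Y) is Whitney (a)-regular at y ∈ Y. Let f_i : M → ℝⁿ be C¹ maps converging to f in the C¹ topology (locally uniformly with derivatives), with f transverse to both X and Y. Then for all sufficiently large i (and in a neighborhood of any compact set), f_i is transverse to Y at points mapping near y. -/

import Mathlib

open Filter Topology Set

variable {n : ℕ}

/-- Tangent space of a set at a point: span of the tangent cone. -/
noncomputable def tangentAt {E : Type*} [NormedAddCommGroup E] [NormedSpace ℝ E]
    (S : Set E) (x : E) : Submodule ℝ E :=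
  Submodule.span ℝ (tangentConeAt ℝ S x)

/-- `S` is a `C¹` submanifold of codimension `c`. -/
def IsC1Submanifold {E : Type*} [NormedAddCommGroup E] [NormedSpace ℝ E]
    (c : ℕ) (S : Set E) : Prop :=
  ∀ x ∈ S, ∃ (U : Set E) (F : E → EuclideanSpace ℝ (Fin c)),
    IsOpen U ∧ x ∈ U ∧ ContDiffOn ℝ 1 F U ∧
    (∀ y ∈ U ∩ S, Function.Surjective (fderiv ℝ F y)) ∧
    S ∩ U = {y ∈ U | F y = 0}

/-- Orthogonal projection onto a subspace, as a continuous endomorphism; used to express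
Grassmannian convergence of subspaces. -/
noncomputable def projCLM (K : Submodule ℝ (EuclideanSpace ℝ (Fin n))) :
    EuclideanSpace ℝ (Fin n) →L[ℝ] EuclideanSpace ℝ (Fin n) :=
  K.subtypeL.comp K.orthogonalProjection

/-- Whitney `(a)`-regularity of `X` over `Y` at `y`: for any sequence `x i ∈ X` tending to
`y` whose tangent spaces converge (in the Grassmannian) to a subspace `τ`, one has
`T_y Y ⊆ τ`. -/
def WhitneyARegularAt (X Y : Set (EuclideanSpace ℝ (Fin n)))
    (y : EuclideanSpace ℝ (Fin n)) : Prop :=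
  ∀ (x : ℕ → EuclideanSpace ℝ (Fin n)), (∀ i, x i ∈ X) → Tendsto x atTop (𝓝 y) →
    ∀ τ : Submodule ℝ (EuclideanSpace ℝ (Fin n)),
      Tendsto (fun i => projCLM (tangentAt X (x i))) atTop (𝓝 (projCLM τ)) →
      tangentAt Y y ≤ τ

section Aux

/-- Transversality of `range L` with `ker T` is equivalent to surjectivity of `T ∘ L`,
when `T` is surjective. -/
lemma aux_sup_eq_top_iff_surj_comp {E F G : Type*} [NormedAddCommGroup E] [NormedSpace ℝ E]
    [NormedAddCommGroup F] [NormedSpace ℝ F] [NormedAddCommGroup G] [NormedSpace ℝ G]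
    (L : F →L[ℝ] E) (T : E →L[ℝ] G) (hT : Function.Surjective T) :
    LinearMap.range (L : F →ₗ[ℝ] E) ⊔ LinearMap.ker (T : E →ₗ[ℝ] G) = ⊤ ↔ Function.Surjective (T.comp L) := by
  constructor
  · intro h w
    obtain ⟨e, he⟩ := hT w
    have he' : e ∈ LinearMap.range (L : F →ₗ[ℝ] E) ⊔ LinearMap.ker (T : E →ₗ[ℝ] G) := by rw [h]; trivial
    obtain ⟨u, hu, k, hk, rfl⟩ := Submodule.mem_sup.1 he'
    obtain ⟨a, rfl⟩ := hu
    refine ⟨a, ?_⟩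
    have hk0 : T k = 0 := LinearMap.mem_ker.1 hk
    simpa [hk0] using he
  · intro h
    rw [eq_top_iff]
    intro e _
    obtain ⟨a, ha⟩ := h (T e)
    have hk : e - L a ∈ LinearMap.ker (T : E →ₗ[ℝ] G) := by
      have : T (L a) = T e := by simpa using ha
      simp [LinearMap.mem_ker, map_sub, this]
    have : e = L a + (e - L a) := by abel
    rw [this]
    exact Submodule.add_mem _ (Submodule.mem_sup_left ⟨a, rfl⟩) (Submodule.mem_sup_right hk)

/-- The tangent space of a level set of a `C¹` submersion equals the kernel of the
derivative of the defining function. -/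
lemma tangentAt_eq_ker {E : Type*} [NormedAddCommGroup E] [NormedSpace ℝ E] [CompleteSpace E]
    {c : ℕ} {S U : Set E} {F : E → EuclideanSpace ℝ (Fin c)} {z : E}
    (hU : IsOpen U) (hzU : z ∈ U) (hF : ContDiffOn ℝ 1 F U)
    (hsurj : Function.Surjective (fderiv ℝ F z))
    (hSU : S ∩ U = {w ∈ U | F w = 0}) (hzS : z ∈ S) :
    tangentAt S z = LinearMap.ker (fderiv ℝ F z : E →ₗ[ℝ] EuclideanSpace ℝ (Fin c)) := by
  have hzSU : z ∈ S ∩ U := ⟨hzS, hzU⟩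
  have hFz : F z = 0 := by rw [hSU] at hzSU; exact hzSU.2
  have hct : ContDiffAt ℝ 1 F z := hF.contDiffAt (hU.mem_nhds hzU)
  have hdiff : DifferentiableAt ℝ F z := hct.differentiableAt one_ne_zero
  have hder : HasFDerivAt F (fderiv ℝ F z) z := hdiff.hasFDerivAt
  set G := fderiv ℝ F z with hG
  apply le_antisymm
  · -- tangent cone ⊆ ker
    rw [tangentAt, Submodule.span_le]
    rintro v hv
    obtain ⟨c', d, hc, hd, hcd⟩ := mem_tangentConeAt_iff_exists_seq_norm_tendsto_atTop.1 hv
    have hd0 : Tendsto d atTop (𝓝 0) := tangentConeAt.lim_zero atTop hc hcd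
    have hzd : Tendsto (fun k => z + d k) atTop (𝓝 z) := by
      simpa using tendsto_const_nhds.add hd0
    have hdU : ∀ᶠ k in atTop, z + d k ∈ U := hzd.eventually (hU.eventually_mem hzU)
    have hFd : ∀ᶠ k in atTop, F (z + d k) = 0 := (hd.and hdU).mono fun k hk => by
      have : z + d k ∈ S ∩ U := ⟨hk.1, hk.2⟩
      rw [hSU] at this; exact this.2
    have ho : (fun k => F (z + d k) - F z - G (d k)) =o[atTop] fun k => d k :=
      (hasFDerivAt_iff_isLittleO_nhds_zero.1 hder).comp_tendsto hd0
    have ho2 : (fun k => G (d k)) =o[atTop] fun k => d k := by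
      have : (fun k => -G (d k)) =o[atTop] fun k => d k := by
        refine ho.congr' ?_ EventuallyEq.rfl
        exact hFd.mono fun k hk => by simp [hk, hFz]
      exact this.of_neg_left
    have ho3 : (fun k => c' k • G (d k)) =o[atTop] fun k => c' k • d k :=
      (Asymptotics.isBigO_refl c' atTop).smul_isLittleO ho2
    have hbd : (fun k => c' k • d k) =O[atTop] (fun _ => (1 : ℝ)) := hcd.isBigO_one ℝ
    have h0 : Tendsto (fun k => c' k • G (d k)) atTop (𝓝 0) :=
      (Asymptotics.isLittleO_one_iff ℝ).1 (ho3.trans_isBigO hbd)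
    have h1 : Tendsto (fun k => c' k • G (d k)) atTop (𝓝 (G v)) := by
      have := (G.continuous.tendsto v).comp hcd
      simpa only [Function.comp_def, map_smul] using this
    exact LinearMap.mem_ker.2 (tendsto_nhds_unique h1 h0)
  · -- ker ⊆ span of tangent cone
    intro v hv
    apply Submodule.subset_span
    have hstrict : HasStrictFDerivAt F G z := hct.hasStrictFDerivAt one_ne_zero
    have hrange : LinearMap.range (G : E →ₗ[ℝ] EuclideanSpace ℝ (Fin c)) = ⊤ := LinearMap.range_eq_top.2 hsurj
    set vb : LinearMap.ker (G : E →ₗ[ℝ] EuclideanSpace ℝ (Fin c)) := ⟨v, hv⟩ with hvb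
    set g : ℝ → E := fun t => hstrict.implicitFunction F G hrange (F z) (t • vb) with hgdef
    have hg0 : g 0 = z := by
      simp only [hgdef, zero_smul]
      exact hstrict.implicitFunction_apply_image hrange
    have hgd : HasDerivAt g v 0 := by
      have h1 : HasFDerivAt (hstrict.implicitFunction F G hrange (F z))
          G.ker.subtypeL ((fun t : ℝ => t • vb) 0) := by
        rw [show (fun t : ℝ => t • vb) 0 = 0 by simp]
        exact (hstrict.to_implicitFunction hrange).hasFDerivAt
      have h2 : HasDerivAt (fun t : ℝ => t • vb) vb 0 := by
        simpa using (hasDerivAt_id (0 : ℝ)).smul_const vb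
      exact h1.comp_hasDerivAt 0 h2
    have hFg : ∀ᶠ t in 𝓝 (0 : ℝ), F (g t) = F z := by
      have hmap := hstrict.map_implicitFunction_eq hrange
      have htt : Tendsto (fun t : ℝ => ((F z), t • vb)) (𝓝 0)
          (𝓝 ((F z), (0 : LinearMap.ker (G : E →ₗ[ℝ] EuclideanSpace ℝ (Fin c))))) := by
        refine Tendsto.prodMk_nhds tendsto_const_nhds ?_
        have : Tendsto (fun t : ℝ => t • vb) (𝓝 0) (𝓝 ((0 : ℝ) • vb)) :=
          (continuous_id.smul continuous_const).tendsto 0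
        simpa using this
      exact htt.eventually hmap
    have hgU : ∀ᶠ t in 𝓝 (0 : ℝ), g t ∈ U :=
      hgd.continuousAt.eventually_mem (by rw [hg0]; exact hU.mem_nhds hzU)
    have hgS : ∀ᶠ t in 𝓝 (0 : ℝ), g t ∈ S := (hFg.and hgU).mono fun t ht => by
      have : g t ∈ S ∩ U := by rw [hSU]; exact ⟨ht.2, by rw [ht.1, hFz]⟩
      exact this.1
    have hseq : Tendsto (fun k : ℕ => ((k : ℝ) + 1)⁻¹) atTop (𝓝 0) := by
      simpa only [one_div] using tendsto_one_div_add_atTop_nhds_zero_nat (𝕜 := ℝ)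
    refine mem_tangentConeAt_iff_exists_seq_norm_tendsto_atTop.2
      ⟨fun k => (k : ℝ) + 1, fun k => g (((k : ℝ) + 1)⁻¹) - z, ?_, ?_, ?_⟩
    swap
    · exact (hseq.eventually hgS).mono fun k hk => by simpa using hk
    · have h1 : Tendsto (fun k : ℕ => (k : ℝ) + 1) atTop atTop :=
        tendsto_atTop_add_const_right _ _ tendsto_natCast_atTop_atTop
      have : (fun k : ℕ => ‖(k : ℝ) + 1‖) = fun k : ℕ => (k : ℝ) + 1 :=
        funext fun k => by rw [Real.norm_eq_abs, abs_of_nonneg (by positivity)]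
      rw [this]; exact h1
    · have hs := hasDerivAt_iff_tendsto_slope.1 hgd
      have hseq' : Tendsto (fun k : ℕ => ((k : ℝ) + 1)⁻¹) atTop (𝓝[≠] (0 : ℝ)) := by
        refine tendsto_nhdsWithin_of_tendsto_nhds_of_eventually_within _ hseq ?_
        exact Eventually.of_forall fun k => by
          simp only [mem_compl_iff, mem_singleton_iff]
          positivity
      have := hs.comp hseq'
      refine this.congr fun k => ?_
      simp [slope, hg0, inv_inv]
  done

/-- Surjectivity is stable along convergence of continuous linear maps into a
finite-dimensional space. -/
lemma eventually_surj {ι : Type*} {l : Filter ι} {E : Type*} [NormedAddCommGroup E]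
    [NormedSpace ℝ E] {c : ℕ}
    (A : ι → (E →L[ℝ] EuclideanSpace ℝ (Fin c))) (T : E →L[ℝ] EuclideanSpace ℝ (Fin c))
    (hA : Tendsto A l (𝓝 T)) (hT : Function.Surjective T) :
    ∀ᶠ i in l, Function.Surjective (A i) := by
  obtain ⟨S₀, hS₀⟩ := (T : E →ₗ[ℝ] EuclideanSpace ℝ (Fin c)).exists_rightInverse_of_surjective
    (LinearMap.range_eq_top.2 hT)
  set S : EuclideanSpace ℝ (Fin c) →L[ℝ] E := LinearMap.toContinuousLinearMap S₀ with hS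
  have hcomp : Tendsto (fun i => (A i).comp S) l (𝓝 (T.comp S)) := by
    have hcont : Continuous fun M : E →L[ℝ] EuclideanSpace ℝ (Fin c) => M.comp S :=
      ((ContinuousLinearMap.compL ℝ (EuclideanSpace ℝ (Fin c)) E
        (EuclideanSpace ℝ (Fin c))).flip S).continuous
    exact (hcont.tendsto T).comp hA
  have hTS : T.comp S = ContinuousLinearMap.id ℝ (EuclideanSpace ℝ (Fin c)) := by
    refine ContinuousLinearMap.ext fun w => ?_
    have := LinearMap.ext_iff.1 hS₀ w
    simpa [hS] using this
  have hunit : ∀ᶠ i in l, IsUnit ((A i).comp S) := by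
    rw [hTS] at hcomp
    have h1 : {M : EuclideanSpace ℝ (Fin c) →L[ℝ] EuclideanSpace ℝ (Fin c) | IsUnit M}
        ∈ 𝓝 (ContinuousLinearMap.id ℝ (EuclideanSpace ℝ (Fin c))) := by
      refine Units.isOpen.mem_nhds ?_
      rw [← ContinuousLinearMap.one_def]
      exact isUnit_one
    exact hcomp.eventually_mem h1
  refine hunit.mono fun i hi => ?_
  obtain ⟨u, hu⟩ := hi
  intro w
  refine ⟨S ((↑u⁻¹ : EuclideanSpace ℝ (Fin c) →L[ℝ] EuclideanSpace ℝ (Fin c)) w), ?_⟩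
  have h2 : ((A i).comp S) ((↑u⁻¹ : EuclideanSpace ℝ (Fin c) →L[ℝ] EuclideanSpace ℝ (Fin c)) w)
      = w := by
    rw [← hu]
    have := congrArg (fun M : EuclideanSpace ℝ (Fin c) →L[ℝ] EuclideanSpace ℝ (Fin c) =>
      M w) u.mul_inv
    simpa only [ContinuousLinearMap.mul_apply, ContinuousLinearMap.one_apply] using this
  simpa using h2

end Aux

/-- Along a sequence in `K` with diverging indices, a uniformly convergent family
converges to its limit in distance. -/
lemma tendsto_dist_of_unif {α β : Type*} [PseudoMetricSpace β] {F : ℕ → α → β} {f : α → β}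
    {K : Set α} (h : TendstoUniformlyOn F f atTop K) {x : ℕ → α} (hx : ∀ j, x j ∈ K)
    {i : ℕ → ℕ} (hi : Tendsto i atTop atTop) :
    Tendsto (fun j => dist (F (i j) (x j)) (f (x j))) atTop (𝓝 0) := by
  rw [Metric.tendsto_atTop]
  intro ε hε
  have h1 := Metric.tendstoUniformlyOn_iff.1 h ε hε
  obtain ⟨N, hN⟩ := eventually_atTop.1 (hi.eventually h1)
  refine ⟨N, fun j hj => ?_⟩
  rw [Real.dist_eq, sub_zero, abs_of_nonneg dist_nonneg, dist_comm]
  exact hN j hj (x j) (hx j)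


/-- stability of transversality under `(a)`-regularity, local `C¹` form:
if `(X, Y)` is Whitney `(a)`-regular at `y ∈ Y ⊆ closure X`, and `C¹` maps `f i` converge
to `f` locally uniformly together with their derivatives, with `f` transverse to `X` and
to `Y`, then on any compact set, for `i` large, `f i` is transverse to `Y` at all points
mapping near `y`. -/
theorem stmt_13 {m cX cY : ℕ}
    (X Y : Set (EuclideanSpace ℝ (Fin n)))
    (hX : IsC1Submanifold cX X) (hY : IsC1Submanifold cY Y)
    (hdisj : Disjoint X Y) (hadj : Y ⊆ closure X)
    (y : EuclideanSpace ℝ (Fin n)) (hy : y ∈ Y)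
    (ha : WhitneyARegularAt X Y y)
    (f : EuclideanSpace ℝ (Fin m) → EuclideanSpace ℝ (Fin n))
    (fs : ℕ → EuclideanSpace ℝ (Fin m) → EuclideanSpace ℝ (Fin n))
    (hf : ContDiff ℝ 1 f) (hfs : ∀ i, ContDiff ℝ 1 (fs i))
    -- `fs i → f` and `D(fs i) → Df` uniformly on compact sets
    (hconv : ∀ K : Set (EuclideanSpace ℝ (Fin m)), IsCompact K →
      TendstoUniformlyOn (fun i x => fs i x) f atTop K ∧
      TendstoUniformlyOn (fun i x => fderiv ℝ (fs i) x) (fun x => fderiv ℝ f x) atTop K)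
    (hfX : ∀ x, f x ∈ X →
      LinearMap.range (fderiv ℝ f x : EuclideanSpace ℝ (Fin m) →ₗ[ℝ] EuclideanSpace ℝ (Fin n)) ⊔ tangentAt X (f x) = ⊤)
    (hfY : ∀ x, f x ∈ Y →
      LinearMap.range (fderiv ℝ f x : EuclideanSpace ℝ (Fin m) →ₗ[ℝ] EuclideanSpace ℝ (Fin n)) ⊔ tangentAt Y (f x) = ⊤) :
    ∀ K : Set (EuclideanSpace ℝ (Fin m)), IsCompact K →
      ∃ V ∈ 𝓝 y, ∀ᶠ i in atTop, ∀ x ∈ K, fs i x ∈ Y ∩ V →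
        LinearMap.range (fderiv ℝ (fs i) x : EuclideanSpace ℝ (Fin m) →ₗ[ℝ] EuclideanSpace ℝ (Fin n)) ⊔ tangentAt Y (fs i x) = ⊤ := by
  obtain ⟨U, F, hU, hyU, hF, hsurj, hYU⟩ := hY y hy
  intro K hK
  by_contra hcon
  push_neg at hcon
  have key : ∀ k : ℕ, ∃ i, k ≤ i ∧ ∃ x, x ∈ K ∧
      fs i x ∈ Y ∩ (U ∩ Metric.ball y (1 / ((k : ℝ) + 1))) ∧
      ¬(LinearMap.range (fderiv ℝ (fs i) x : EuclideanSpace ℝ (Fin m) →ₗ[ℝ] EuclideanSpace ℝ (Fin n)) ⊔ tangentAt Y (fs i x) = ⊤) := by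
    intro k
    have hV : U ∩ Metric.ball y (1 / ((k : ℝ) + 1)) ∈ 𝓝 y :=
      inter_mem (hU.mem_nhds hyU) (Metric.ball_mem_nhds y (by positivity))
    have h1 := hcon _ hV
    obtain ⟨i, hik, hi⟩ := (frequently_atTop.1 h1) k
    obtain ⟨x, hxK, hmem, hnt⟩ := hi
    exact ⟨i, hik, x, hxK, hmem, hnt⟩
  choose i hik x hxK hmem hnt using key
  obtain ⟨xl, hxlK, φ, hφ, hxconv⟩ := hK.tendsto_subseq hxK
  have hij : Tendsto (fun j => i (φ j)) atTop atTop :=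
    tendsto_atTop_mono (fun j => (hφ.id_le j).trans (hik (φ j))) tendsto_id
  set yj : ℕ → EuclideanSpace ℝ (Fin n) := fun j => fs (i (φ j)) (x (φ j)) with hyjdef
  have hyjY : ∀ j, yj j ∈ Y := fun j => (hmem (φ j)).1
  have hyjU : ∀ j, yj j ∈ U := fun j => (hmem (φ j)).2.1
  have hyjball : ∀ j, dist (yj j) y < 1 / ((φ j : ℝ) + 1) := fun j =>
    Metric.mem_ball.1 (hmem (φ j)).2.2
  have hrad : Tendsto (fun j => 1 / ((φ j : ℝ) + 1)) atTop (𝓝 0) :=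
    tendsto_one_div_add_atTop_nhds_zero_nat.comp hφ.tendsto_atTop
  have hyjy : Tendsto yj atTop (𝓝 y) := by
    rw [tendsto_iff_dist_tendsto_zero]
    exact squeeze_zero (fun j => dist_nonneg) (fun j => (hyjball j).le) hrad
  -- `yj` also tends to `f xl`
  have hfx : Tendsto yj atTop (𝓝 (f xl)) := by
    have h1 : Tendsto (fun j => f (x (φ j))) atTop (𝓝 (f xl)) :=
      (hf.continuous.tendsto _).comp hxconv
    have h2 := tendsto_dist_of_unif (hconv K hK).1 (fun j => hxK (φ j)) hij
    refine tendsto_of_tendsto_of_dist h1 ?_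
    simpa [dist_comm] using h2
  have hfxy : f xl = y := tendsto_nhds_unique hfx hyjy
  -- derivative convergence
  have hL : Tendsto (fun j => fderiv ℝ (fs (i (φ j))) (x (φ j))) atTop
      (𝓝 (fderiv ℝ f xl)) := by
    have h1 : Tendsto (fun j => fderiv ℝ f (x (φ j))) atTop (𝓝 (fderiv ℝ f xl)) :=
      ((hf.continuous_fderiv one_ne_zero).tendsto _).comp hxconv
    have h2 := tendsto_dist_of_unif (hconv K hK).2 (fun j => hxK (φ j)) hij
    refine tendsto_of_tendsto_of_dist h1 ?_
    simpa [dist_comm] using h2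
  have hGt : Tendsto (fun j => fderiv ℝ F (yj j)) atTop (𝓝 (fderiv ℝ F y)) := by
    have hco : ContinuousOn (fderiv ℝ F) U := hF.continuousOn_fderiv_of_isOpen hU le_rfl
    exact ((hco y hyU).tendsto).comp
      (tendsto_nhdsWithin_of_tendsto_nhds_of_eventually_within _ hyjy
        (Eventually.of_forall hyjU))
  have hGL : Tendsto (fun j => (fderiv ℝ F (yj j)).comp (fderiv ℝ (fs (i (φ j))) (x (φ j))))
      atTop (𝓝 ((fderiv ℝ F y).comp (fderiv ℝ f xl))) := by
    have hb := (isBoundedBilinearMap_comp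
      (𝕜 := ℝ) (E := EuclideanSpace ℝ (Fin m)) (F := EuclideanSpace ℝ (Fin n))
      (G := EuclideanSpace ℝ (Fin cY))).continuous
    exact (hb.tendsto ((fderiv ℝ F y, fderiv ℝ f xl))).comp (hGt.prodMk_nhds hL)
  have hTsurj : Function.Surjective ((fderiv ℝ F y).comp (fderiv ℝ f xl)) := by
    refine (aux_sup_eq_top_iff_surj_comp _ _ (hsurj y ⟨hyU, hy⟩)).1 ?_
    have h0 := hfY xl (by rw [hfxy]; exact hy)
    rw [hfxy] at h0
    have hker := tangentAt_eq_ker hU hyU hF (hsurj y ⟨hyU, hy⟩) hYU hy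
    rw [← hker]
    exact h0
  obtain ⟨j, hj⟩ := (eventually_surj _ _ hGL hTsurj).exists
  refine hnt (φ j) ?_
  have hkerj := tangentAt_eq_ker hU (hyjU j) hF (hsurj _ ⟨hyjU j, hyjY j⟩) hYU (hyjY j)
  rw [show fs (i (φ j)) (x (φ j)) = yj j from rfl, hkerj]
  exact (aux_sup_eq_top_iff_surj_comp _ _ (hsurj _ ⟨hyjU j, hyjY j⟩)).2 hj
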